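/- Uniform Gronwall Lemma: Let t0 < t1 be real numbers and let g, h, y be three positive locally integrable functions on (t0, t1), with y differentiable and satisfying y'(t) ≤ g(t)·y(t) + h(t) for all t ∈ (t0, t1). Suppose there are positive constants α, a1, a2, a3 such that for every t with t0 ≤ t and t + α < t1 one has ∫_t^{t+α} g(τ) dτ ≤ a1, ∫_t^{t+α} h(τ) dτ ≤ a2, and ∫_t^{t+α} y(τ) dτ ≤ a3. Then for every t with t0 ≤ t and t + α < t1, y(t + α) ≤ (a3/α + a2)·e^{a1}. -/

import Mathlib

open MeasureTheory intervalIntegral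

namespace UGAux

open Set Filter Topology


variable {s b : ℝ} {g F y : ℝ → ℝ}

lemma II_of_int (hg : IntegrableOn g (Icc s b))
    {u v : ℝ} (hu : s ≤ u) (huv : u ≤ v) (hv : v ≤ b) :
    IntervalIntegrable g volume u v := by
  rw [intervalIntegrable_iff_integrableOn_Icc_of_le huv]
  exact hg.mono_set (Icc_subset_Icc hu hv)

lemma int_mul_cont (hg : IntegrableOn g (Icc s b)) (hF : ContinuousOn F (Icc s b)) :
    IntegrableOn (fun x => F x * g x) (Icc s b) := by
  obtain ⟨C, hC⟩ := isCompact_Icc.exists_bound_of_continuousOn hF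
  refine Integrable.bdd_mul (c := C) hg (hF.aestronglyMeasurable measurableSet_Icc) ?_
  filter_upwards [ae_restrict_mem measurableSet_Icc] with x hx
  exact hC x hx

lemma int_mul_cont' (hg : IntegrableOn g (Icc s b)) (hF : ContinuousOn F (Icc s b)) :
    IntegrableOn (fun x => g x * F x) (Icc s b) := by
  have := int_mul_cont hg hF
  simpa [mul_comm] using this

lemma primitive_sub (hg : IntegrableOn g (Icc s b)) {u v : ℝ} (hu : s ≤ u) (huv : u ≤ v)
    (hv : v ≤ b) :
    (∫ σ in s..v, g σ) - (∫ σ in s..u, g σ) = ∫ σ in u..v, g σ :=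
  integral_interval_sub_left (II_of_int hg le_rfl (hu.trans huv) hv)
    (II_of_int hg le_rfl hu (huv.trans hv))

lemma primitive_mono (hg : IntegrableOn g (Icc s b)) (hg0 : ∀ x ∈ Icc s b, 0 ≤ g x)
    {u v : ℝ} (hu : s ≤ u) (huv : u ≤ v) (hv : v ≤ b) :
    (∫ σ in s..u, g σ) ≤ ∫ σ in s..v, g σ := by
  have h1 := primitive_sub hg hu huv hv
  have h2 : 0 ≤ ∫ σ in u..v, g σ :=
    intervalIntegral.integral_nonneg huv fun x hx => hg0 x ⟨hu.trans hx.1, hx.2.trans hv⟩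
  linarith

lemma primitive_nonneg (hg : IntegrableOn g (Icc s b)) (hg0 : ∀ x ∈ Icc s b, 0 ≤ g x)
    {u : ℝ} (hu : s ≤ u) (hub : u ≤ b) :
    0 ≤ ∫ σ in s..u, g σ := by
  have := primitive_mono hg hg0 le_rfl hu hub
  simpa using this

lemma primitive_cont (hg : IntegrableOn g (Icc s b)) (hsb : s ≤ b) :
    ContinuousOn (fun r => ∫ σ in s..r, g σ) (Icc s b) := by
  have h : IntegrableOn g (uIcc s b) := by rwa [uIcc_of_le hsb]
  have := continuousOn_primitive_interval (f := g) (μ := volume) h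
  rwa [uIcc_of_le hsb] at this

/-- Key inequality: `∫ g e^G ≤ e^{G b} - 1` where `G r = ∫_s^r g`. -/
lemma star_exp (hsb : s ≤ b) (hg : IntegrableOn g (Icc s b))
    (hg0 : ∀ x ∈ Icc s b, 0 ≤ g x) :
    (∫ τ in s..b, g τ * Real.exp (∫ σ in s..τ, g σ))
      ≤ Real.exp (∫ σ in s..b, g σ) - 1 := by
  set G : ℝ → ℝ := fun r => ∫ σ in s..r, g σ with hGdef
  set T : ℝ := G b with hTdef
  have hT0 : 0 ≤ T := primitive_nonneg hg hg0 hsb le_rfl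
  have hGcont : ContinuousOn G (Icc s b) := primitive_cont hg hsb
  have hGmono : ∀ u v : ℝ, s ≤ u → u ≤ v → v ≤ b → G u ≤ G v := fun u v hu huv hv =>
    primitive_mono hg hg0 hu huv hv
  have hGs : G s = 0 := integral_same
  have hexpcont : ContinuousOn (fun τ => Real.exp (G τ)) (Icc s b) :=
    Real.continuous_exp.comp_continuousOn hGcont
  have hint : IntegrableOn (fun τ => g τ * Real.exp (G τ)) (Icc s b) :=
    int_mul_cont' hg hexpcont
  -- per-interval bound
  have key : ∀ u v : ℝ, s ≤ u → u ≤ v → v ≤ b →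
      (∫ τ in u..v, g τ * Real.exp (G τ)) ≤ Real.exp (G v) * (G v - G u) := by
    intro u v hu huv hv
    have hsub : Icc u v ⊆ Icc s b := Icc_subset_Icc hu hv
    have h1 : (∫ τ in u..v, g τ * Real.exp (G τ)) ≤ ∫ τ in u..v, g τ * Real.exp (G v) := by
      apply intervalIntegral.integral_mono_on huv
      · rw [intervalIntegrable_iff_integrableOn_Icc_of_le huv]
        exact hint.mono_set hsub
      · exact (II_of_int hg hu huv hv).mul_const _
      · intro x hx
        have hx' := hsub hx
        have hGle : G x ≤ G v := hGmono x v hx'.1 hx.2 hv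
        exact mul_le_mul_of_nonneg_left (Real.exp_le_exp.2 hGle) (hg0 x hx')
    rw [intervalIntegral.integral_mul_const] at h1
    have h3 : G v - G u = ∫ σ in u..v, g σ := primitive_sub hg hu huv hv
    rw [h3, mul_comm]
    exact h1
  -- bound for each n ≥ 1
  have bound : ∀ n : ℕ, 0 < n →
      (∫ τ in s..b, g τ * Real.exp (G τ)) ≤ Real.exp (T / n) * (Real.exp T - 1) := by
    intro n hn
    have hn0 : (n : ℝ) ≠ 0 := Nat.cast_ne_zero.2 hn.ne'
    set Δ : ℝ := T / n with hΔdef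
    have hΔ0 : 0 ≤ Δ := div_nonneg hT0 n.cast_nonneg
    have hnΔ : (n : ℝ) * Δ = T := by rw [hΔdef]; field_simp
    set A : ℕ → Set ℝ := fun i => {x ∈ Icc s b | (i : ℝ) * Δ ≤ G x} with hAdef
    have hAsub : ∀ i, A i ⊆ Icc s b := fun i => sep_subset _ _
    have hAne : ∀ i, i ≤ n → (A i).Nonempty := by
      intro i hi
      refine ⟨b, right_mem_Icc.2 hsb, ?_⟩
      have : (i : ℝ) * Δ ≤ (n : ℝ) * Δ := by
        have : (i : ℝ) ≤ (n : ℝ) := Nat.cast_le.2 hi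
        nlinarith
      rw [hnΔ] at this; exact this
    have hAclosed : ∀ i, IsClosed (A i) := by
      intro i
      have : A i = Icc s b ∩ G ⁻¹' (Ici ((i : ℝ) * Δ)) := by
        ext x; simp [hAdef, Set.mem_sep_iff, Set.mem_inter_iff, and_comm]
      rw [this]
      exact ContinuousOn.preimage_isClosed_of_isClosed hGcont isClosed_Icc isClosed_Ici
    have hAbdd : ∀ i, BddBelow (A i) := fun i => (bddBelow_Icc).mono (hAsub i)
    set τ : ℕ → ℝ := fun i => sInf (A i) with hτdef
    have hτmem : ∀ i, i ≤ n → τ i ∈ A i := fun i hi =>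
      (hAclosed i).csInf_mem (hAne i hi) (hAbdd i)
    have hτIcc : ∀ i, i ≤ n → τ i ∈ Icc s b := fun i hi => (hτmem i hi).1
    have hτmono : ∀ i j, i ≤ j → j ≤ n → τ i ≤ τ j := by
      intro i j hij hj
      apply csInf_le_csInf (hAbdd i) (hAne j hj)
      intro x hx
      exact ⟨hx.1, le_trans (by
        have : (i : ℝ) ≤ (j : ℝ) := Nat.cast_le.2 hij
        nlinarith) hx.2⟩
    have hτ0 : τ 0 = s := by
      apply le_antisymm
      · exact csInf_le (hAbdd 0) ⟨left_mem_Icc.2 hsb, by simp [hGs]⟩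
      · exact (hτIcc 0 (Nat.zero_le n)).1
    have hGτ : ∀ i, i ≤ n → G (τ i) = (i : ℝ) * Δ := by
      intro i hi
      have h₁ : (i : ℝ) * Δ ≤ G (τ i) := (hτmem i hi).2
      by_contra hne
      have h₂ : (i : ℝ) * Δ < G (τ i) := lt_of_le_of_ne h₁ (Ne.symm hne)
      have hiΔ0 : 0 ≤ (i : ℝ) * Δ := mul_nonneg i.cast_nonneg hΔ0
      have hτi := hτIcc i hi
      obtain ⟨x, hxmem, hGx⟩ :=
        intermediate_value_Icc hτi.1 (hGcont.mono (Icc_subset_Icc le_rfl hτi.2))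
          (⟨by rw [hGs]; exact hiΔ0, h₂.le⟩ : (i : ℝ) * Δ ∈ Icc (G s) (G (τ i)))
      have hxA : x ∈ A i := ⟨⟨hxmem.1, hxmem.2.trans hτi.2⟩, hGx.ge⟩
      have hτx : τ i ≤ x := csInf_le (hAbdd i) hxA
      have : G (τ i) ≤ G x := hGmono _ _ hτi.1 hτx (hxmem.2.trans hτi.2)
      rw [hGx] at this; linarith
    -- split the integral
    have hII : ∀ u v : ℝ, s ≤ u → u ≤ v → v ≤ b →
        IntervalIntegrable (fun τ => g τ * Real.exp (G τ)) volume u v := by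
      intro u v hu huv hv
      rw [intervalIntegrable_iff_integrableOn_Icc_of_le huv]
      exact hint.mono_set (Icc_subset_Icc hu hv)
    have hsum : (∫ τ in s..b, g τ * Real.exp (G τ))
        = (∑ k ∈ Finset.range n, ∫ τ in τ k..τ (k + 1), g τ * Real.exp (G τ))
          + ∫ τ in τ n..b, g τ * Real.exp (G τ) := by
      rw [intervalIntegral.sum_integral_adjacent_intervals (fun k hk =>
        hII _ _ (hτIcc k hk.le).1 (hτmono k (k + 1) k.le_succ hk) (hτIcc (k + 1) hk).2)]
      rw [hτ0]
      exact (intervalIntegral.integral_add_adjacent_intervals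
        (hII s (τ n) le_rfl (hτIcc n le_rfl).1 (hτIcc n le_rfl).2)
        (hII (τ n) b (hτIcc n le_rfl).1 (hτIcc n le_rfl).2 le_rfl)).symm
    have hlast : (∫ τ in τ n..b, g τ * Real.exp (G τ)) ≤ 0 := by
      have := key (τ n) b (hτIcc n le_rfl).1 (hτIcc n le_rfl).2 le_rfl
      rw [hGτ n le_rfl, hnΔ] at this
      simpa [← hTdef] using this
    have hpiece : ∀ k, k < n → (∫ τ in τ k..τ (k + 1), g τ * Real.exp (G τ))
        ≤ Real.exp Δ * (Real.exp (((k : ℝ) + 1) * Δ) - Real.exp ((k : ℝ) * Δ)) := by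
      intro k hk
      have h1 := key (τ k) (τ (k + 1)) (hτIcc k hk.le).1
        (hτmono k (k + 1) k.le_succ hk) (hτIcc (k + 1) hk).2
      rw [hGτ k hk.le, hGτ (k + 1) hk] at h1
      have hΔe : Δ ≤ Real.exp Δ - 1 := by
        have := Real.add_one_le_exp Δ; linarith
      have hcast : ((k + 1 : ℕ) : ℝ) = (k : ℝ) + 1 := by push_cast; ring
      rw [hcast] at h1
      have h2 : Real.exp (((k : ℝ) + 1) * Δ) * (((k : ℝ) + 1) * Δ - (k : ℝ) * Δ)
          = Real.exp (((k : ℝ) + 1) * Δ) * Δ := by ring_nf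
      rw [h2] at h1
      refine h1.trans ?_
      have hsplit : Real.exp (((k : ℝ) + 1) * Δ) = Real.exp ((k : ℝ) * Δ) * Real.exp Δ := by
        rw [← Real.exp_add]; ring_nf
      rw [hsplit]
      have hek : (0:ℝ) < Real.exp ((k : ℝ) * Δ) := Real.exp_pos _
      have heΔ : (0:ℝ) < Real.exp Δ := Real.exp_pos _
      nlinarith [mul_le_mul_of_nonneg_left hΔe (mul_pos hek heΔ).le]
    have hsum2 : (∑ k ∈ Finset.range n, ∫ τ in τ k..τ (k + 1), g τ * Real.exp (G τ))
        ≤ Real.exp Δ * (Real.exp T - 1) := by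
      calc (∑ k ∈ Finset.range n, ∫ τ in τ k..τ (k + 1), g τ * Real.exp (G τ))
          ≤ ∑ k ∈ Finset.range n,
            Real.exp Δ * (Real.exp (((k : ℝ) + 1) * Δ) - Real.exp ((k : ℝ) * Δ)) :=
            Finset.sum_le_sum fun k hk => hpiece k (Finset.mem_range.1 hk)
        _ = Real.exp Δ * ∑ k ∈ Finset.range n,
            ((fun m : ℕ => Real.exp ((m : ℝ) * Δ)) (k + 1)
              - (fun m : ℕ => Real.exp ((m : ℝ) * Δ)) k) := by
            rw [Finset.mul_sum]; apply Finset.sum_congr rfl; intro k _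
            push_cast; ring_nf
        _ = Real.exp Δ * (Real.exp ((n : ℝ) * Δ) - Real.exp ((0 : ℕ) * Δ)) := by
            rw [Finset.sum_range_sub (fun m : ℕ => Real.exp ((m : ℝ) * Δ))]
        _ = Real.exp Δ * (Real.exp T - 1) := by rw [hnΔ]; norm_num
    calc (∫ τ in s..b, g τ * Real.exp (G τ))
        = _ := hsum
      _ ≤ Real.exp Δ * (Real.exp T - 1) + 0 := add_le_add hsum2 hlast
      _ = Real.exp (T / n) * (Real.exp T - 1) := by rw [add_zero, hΔdef]
  -- take the limit n → ∞
  have htend : Tendsto (fun n : ℕ => Real.exp (T / n) * (Real.exp T - 1)) atTop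
      (𝓝 (Real.exp 0 * (Real.exp T - 1))) := by
    apply Tendsto.mul_const
    exact (Real.continuous_exp.tendsto 0).comp (tendsto_const_div_atTop_nhds_zero_nat T)
  rw [Real.exp_zero, one_mul] at htend
  exact ge_of_tendsto htend (Filter.eventually_atTop.2 ⟨1, fun n hn => bound n hn⟩)


/-- Integral form of Gronwall's inequality. -/
lemma gronwall_int (hsb : s ≤ b) {K : ℝ} (hK : 0 < K)
    (hg : IntegrableOn g (Icc s b)) (hg0 : ∀ x ∈ Icc s b, 0 ≤ g x)
    (hy : ContinuousOn y (Icc s b))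
    (hle : ∀ r ∈ Icc s b, y r ≤ K + ∫ τ in s..r, g τ * y τ) :
    y b ≤ K * Real.exp (∫ σ in s..b, g σ) := by
  have hGcont : ContinuousOn (fun r => ∫ σ in s..r, g σ) (Icc s b) := primitive_cont hg hsb
  have hexpcont : ContinuousOn (fun r => Real.exp (∫ σ in s..r, g σ)) (Icc s b) :=
    Real.continuous_exp.comp_continuousOn hGcont
  have hgyint : IntegrableOn (fun τ => g τ * y τ) (Icc s b) := int_mul_cont' hg hy
  have main : ∀ θ : ℝ, 1 < θ → y b ≤ θ * K * Real.exp (∫ σ in s..b, g σ) := by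
    intro θ hθ
    have hθK : 0 < θ * K := mul_pos (lt_trans one_pos hθ) hK
    set f : ℝ → ℝ := fun r => θ * K * Real.exp (∫ σ in s..r, g σ) - y r with hfdef
    have hfcont : ContinuousOn f (Icc s b) :=
      ((continuousOn_const.mul hexpcont).sub hy)
    -- the set where the estimate holds is closed in [s,b]
    have hCclosed : IsClosed {r ∈ Icc s b | 0 ≤ f r} := by
      have : {r ∈ Icc s b | 0 ≤ f r} = Icc s b ∩ f ⁻¹' (Ici 0) := by
        ext x; simp [Set.mem_sep_iff, and_comm]
      rw [this]
      exact ContinuousOn.preimage_isClosed_of_isClosed hfcont isClosed_Icc isClosed_Ici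
    set S : Set ℝ := {r ∈ Icc s b | ∀ τ ∈ Icc s r, 0 ≤ f τ} with hSdef
    have hfs : 0 < f s := by
      have h1 : y s ≤ K := by
        have := hle s (left_mem_Icc.2 hsb)
        simpa using this
      have h2 : f s = θ * K - y s := by simp [hfdef]
      nlinarith
    have hsS : s ∈ S := by
      refine ⟨left_mem_Icc.2 hsb, fun τ hτ => ?_⟩
      have : τ = s := le_antisymm hτ.2 hτ.1
      rw [this]; exact hfs.le
    have hSbdd : BddAbove S := bddAbove_Icc.mono (sep_subset _ _)
    set c : ℝ := sSup S with hcdef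
    have hsc : s ≤ c := le_csSup hSbdd hsS
    have hcb : c ≤ b := csSup_le ⟨s, hsS⟩ fun x hx => hx.1.2
    have hcIcc : c ∈ Icc s b := ⟨hsc, hcb⟩
    have hIco : ∀ τ ∈ Ico s c, 0 ≤ f τ := by
      intro τ hτ
      obtain ⟨r, hrS, hτr⟩ := exists_lt_of_lt_csSup ⟨s, hsS⟩ hτ.2
      exact hrS.2 τ ⟨hτ.1, hτr.le⟩
    have hc_mem : ∀ τ ∈ Icc s c, 0 ≤ f τ := by
      intro τ hτ
      rcases lt_or_eq_of_le hτ.2 with hlt2 | heq2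
      · exact hIco τ ⟨hτ.1, hlt2⟩
      · rcases eq_or_lt_of_le hsc with h' | h'
        · rw [heq2, ← h']; exact hfs.le
        · have hsub : Icc s c ⊆ {r ∈ Icc s b | 0 ≤ f r} := by
            rw [← closure_Ico h'.ne]
            apply closure_minimal _ hCclosed
            intro x hx
            exact ⟨⟨hx.1, hx.2.le.trans hcb⟩, hIco x hx⟩
          rw [heq2]
          exact (hsub (right_mem_Icc.2 hsc)).2
    -- estimate at c, strictly
    have hstar : (∫ τ in s..c, g τ * Real.exp (∫ σ in s..τ, g σ))
        ≤ Real.exp (∫ σ in s..c, g σ) - 1 :=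
      star_exp hsc (hg.mono_set (Icc_subset_Icc le_rfl hcb))
        (fun x hx => hg0 x ⟨hx.1, hx.2.trans hcb⟩)
    have hmono : (∫ τ in s..c, g τ * y τ)
        ≤ ∫ τ in s..c, g τ * (θ * K * Real.exp (∫ σ in s..τ, g σ)) := by
      apply intervalIntegral.integral_mono_on hsc
      · rw [intervalIntegrable_iff_integrableOn_Icc_of_le hsc]
        exact hgyint.mono_set (Icc_subset_Icc le_rfl hcb)
      · rw [intervalIntegrable_iff_integrableOn_Icc_of_le hsc]
        exact (int_mul_cont' hg (continuousOn_const.mul hexpcont)).mono_set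
          (Icc_subset_Icc le_rfl hcb)
      · intro x hx
        have hfx := hc_mem x hx
        have : y x ≤ θ * K * Real.exp (∫ σ in s..x, g σ) := by
          simp only [hfdef, sub_nonneg] at hfx; exact hfx
        exact mul_le_mul_of_nonneg_left this (hg0 x ⟨hx.1, hx.2.trans hcb⟩)
    have hconst : (∫ τ in s..c, g τ * (θ * K * Real.exp (∫ σ in s..τ, g σ)))
        = θ * K * ∫ τ in s..c, g τ * Real.exp (∫ σ in s..τ, g σ) := by
      rw [← intervalIntegral.integral_const_mul]
      apply intervalIntegral.integral_congr
      intro x _; simp; ring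
    have hyc : y c ≤ K + ∫ τ in s..c, g τ * y τ := hle c hcIcc
    have hstrict : 0 < f c := by
      have h4 : (∫ τ in s..c, g τ * y τ)
          ≤ θ * K * (Real.exp (∫ σ in s..c, g σ) - 1) := by
        calc (∫ τ in s..c, g τ * y τ) ≤ _ := hmono
          _ = θ * K * ∫ τ in s..c, g τ * Real.exp (∫ σ in s..τ, g σ) := hconst
          _ ≤ θ * K * (Real.exp (∫ σ in s..c, g σ) - 1) :=
            mul_le_mul_of_nonneg_left hstar hθK.le
      have h5 : y c ≤ θ * K * Real.exp (∫ σ in s..c, g σ) - (θ - 1) * K := by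
        have := hyc.trans (by linarith : K + (∫ τ in s..c, g τ * y τ)
          ≤ K + θ * K * (Real.exp (∫ σ in s..c, g σ) - 1))
        nlinarith
      have h6 : 0 < (θ - 1) * K := mul_pos (by linarith) hK
      simp only [hfdef]
      nlinarith
    -- c must equal b
    have hceq : c = b := by
      by_contra hne
      have hclt : c < b := lt_of_le_of_ne hcb hne
      have hcw : ContinuousWithinAt f (Icc s b) c := hfcont c hcIcc
      have hev : ∀ᶠ r in 𝓝[Icc s b] c, 0 < f r :=
        hcw.eventually (eventually_gt_nhds hstrict)
      have hev' : {r | 0 < f r} ∈ 𝓝[Icc s b] c := hev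
      rw [Metric.mem_nhdsWithin_iff] at hev'
      obtain ⟨δ, hδ, hball⟩ := hev'
      set r : ℝ := min b (c + δ / 2) with hrdef
      have hcr : c < r := lt_min hclt (by linarith)
      have hrb : r ≤ b := min_le_left _ _
      have hrS : r ∈ S := by
        refine ⟨⟨hsc.trans hcr.le, hrb⟩, fun τ hτ => ?_⟩
        rcases le_or_gt τ c with h | h
        · exact hc_mem τ ⟨hτ.1, h⟩
        · have hτb : τ ≤ b := hτ.2.trans hrb
          have hdist : dist τ c < δ := by
            rw [Real.dist_eq, abs_of_pos (sub_pos.2 h)]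
            have : τ ≤ c + δ / 2 := hτ.2.trans (min_le_right _ _)
            linarith
          exact (hball ⟨Metric.mem_ball.2 hdist, ⟨hτ.1, hτb⟩⟩ : 0 < f τ).le
      exact absurd (le_csSup hSbdd hrS) (not_le.2 hcr)
    have := hstrict
    rw [hceq] at this
    simp only [hfdef] at this
    linarith
  -- let θ → 1⁺
  have hpos : 0 < K * Real.exp (∫ σ in s..b, g σ) := mul_pos hK (Real.exp_pos _)
  refine le_of_forall_pos_le_add fun ε hε => ?_
  have hθ1 : 1 < 1 + ε / (K * Real.exp (∫ σ in s..b, g σ)) := by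
    have : 0 < ε / (K * Real.exp (∫ σ in s..b, g σ)) := div_pos hε hpos
    linarith
  have h := main _ hθ1
  have heq : (1 + ε / (K * Real.exp (∫ σ in s..b, g σ))) * K
      * Real.exp (∫ σ in s..b, g σ) = K * Real.exp (∫ σ in s..b, g σ) + ε := by
    field_simp
  linarith [h.trans_eq heq]


end UGAux

open UGAux Set Filter Topology in
/-- Uniform Gronwall Lemma. -/
theorem uniform_gronwall
    (t0 t1 α a1 a2 a3 : ℝ) (g h y y' : ℝ → ℝ)
    (ht : t0 < t1) (hα : 0 < α) (ha1 : 0 < a1) (ha2 : 0 < a2) (ha3 : 0 < a3)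
    (hg_pos : ∀ t ∈ Set.Ioo t0 t1, 0 < g t)
    (hh_pos : ∀ t ∈ Set.Ioo t0 t1, 0 < h t)
    (hy_pos : ∀ t ∈ Set.Ioo t0 t1, 0 < y t)
    (hg_int : LocallyIntegrableOn g (Set.Ioo t0 t1))
    (hh_int : LocallyIntegrableOn h (Set.Ioo t0 t1))
    (hy_int : LocallyIntegrableOn y (Set.Ioo t0 t1))
    (hderiv : ∀ t ∈ Set.Ioo t0 t1, HasDerivAt y (y' t) t)
    (hineq : ∀ t ∈ Set.Ioo t0 t1, y' t ≤ g t * y t + h t)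
    (hg_bd : ∀ t : ℝ, t0 ≤ t → t + α < t1 → (∫ τ in t..(t + α), g τ) ≤ a1)
    (hh_bd : ∀ t : ℝ, t0 ≤ t → t + α < t1 → (∫ τ in t..(t + α), h τ) ≤ a2)
    (hy_bd : ∀ t : ℝ, t0 ≤ t → t + α < t1 → (∫ τ in t..(t + α), y τ) ≤ a3) :
    ∀ t : ℝ, t0 ≤ t → t + α < t1 → y (t + α) ≤ (a3 / α + a2) * Real.exp a1 := by
  have core : ∀ t : ℝ, t0 < t → t + α < t1 → y (t + α) ≤ (a3 / α + a2) * Real.exp a1 := by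
    intro t ht0 ht1
    set b : ℝ := t + α with hbdef
    have htb : t < b := by simp [hbdef]; linarith
    have hIcc : Icc t b ⊆ Set.Ioo t0 t1 := fun x hx => ⟨lt_of_lt_of_le ht0 hx.1, lt_of_le_of_lt hx.2 ht1⟩
    have hgI : IntegrableOn g (Icc t b) := hg_int.integrableOn_compact_subset hIcc isCompact_Icc
    have hhI : IntegrableOn h (Icc t b) := hh_int.integrableOn_compact_subset hIcc isCompact_Icc
    have hyI : IntegrableOn y (Icc t b) := hy_int.integrableOn_compact_subset hIcc isCompact_Icc
    have hycont : ContinuousOn y (Icc t b) := fun x hx =>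
      ((hderiv x (hIcc hx)).continuousAt).continuousWithinAt
    -- key pointwise estimate
    have key : ∀ s ∈ Icc t b, y b ≤ (y s + a2) * Real.exp a1 := by
      intro s hs
      have hsb : s ≤ b := hs.2
      have hsubIcc : Icc s b ⊆ Icc t b := Icc_subset_Icc hs.1 le_rfl
      have hgI' : IntegrableOn g (Icc s b) := hgI.mono_set hsubIcc
      have hhI' : IntegrableOn h (Icc s b) := hhI.mono_set hsubIcc
      have hg0' : ∀ x ∈ Icc s b, 0 ≤ g x := fun x hx => (hg_pos x (hIcc (hsubIcc hx))).le
      have hh0' : ∀ x ∈ Icc s b, 0 ≤ h x := fun x hx => (hh_pos x (hIcc (hsubIcc hx))).le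
      have hycont' : ContinuousOn y (Icc s b) := hycont.mono hsubIcc
      have hgyint : IntegrableOn (fun τ => g τ * y τ) (Icc s b) := int_mul_cont' hgI' hycont'
      set K : ℝ := y s + ∫ τ in s..b, h τ with hKdef
      have hhint_nonneg : 0 ≤ ∫ τ in s..b, h τ :=
        intervalIntegral.integral_nonneg hsb hh0'
      have hKpos : 0 < K := add_pos_of_pos_of_nonneg (hy_pos s (hIcc (hsubIcc (left_mem_Icc.2 hsb)))) hhint_nonneg
      -- integral inequality from the differential one
      have hineq2 : ∀ r ∈ Icc s b, y r ≤ K + ∫ τ in s..r, g τ * y τ := by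
        intro r hr
        have hsr : s ≤ r := hr.1
        have hsub2 : Icc s r ⊆ Icc s b := Icc_subset_Icc le_rfl hr.2
        have h1 : y r - y s ≤ ∫ τ in s..r, (g τ * y τ + h τ) := by
          apply sub_le_integral_of_hasDeriv_right_of_le hsr
            (hycont'.mono hsub2)
            (fun x hx => (hderiv x (hIcc (hsubIcc (hsub2 ⟨hx.1.le, hx.2.le⟩)))).hasDerivWithinAt)
            ((hgyint.mono_set hsub2).add (hhI'.mono_set hsub2))
            (fun x hx => hineq x (hIcc (hsubIcc (hsub2 ⟨hx.1.le, hx.2.le⟩))))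
        have h2 : (∫ τ in s..r, (g τ * y τ + h τ))
            = (∫ τ in s..r, g τ * y τ) + ∫ τ in s..r, h τ := by
          apply intervalIntegral.integral_add
          · rw [intervalIntegrable_iff_integrableOn_Icc_of_le hsr]
            exact hgyint.mono_set hsub2
          · exact II_of_int hhI' le_rfl hsr hr.2
        have h3 : (∫ τ in s..r, h τ) ≤ ∫ τ in s..b, h τ := by
          have hd := primitive_sub hhI' le_rfl hsr hr.2
          have hd2 := primitive_sub hhI' le_rfl hsb le_rfl
          have h5 : (∫ τ in s..b, h τ) - (∫ τ in s..r, h τ) = ∫ τ in r..b, h τ :=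
            primitive_sub hhI' hsr hr.2 le_rfl
          have h6 : 0 ≤ ∫ τ in r..b, h τ :=
            intervalIntegral.integral_nonneg hr.2 fun x hx => hh0' x ⟨hsr.trans hx.1, hx.2⟩
          linarith
        have h4 := h1.trans (by rw [h2])
        simp only [hKdef]
        linarith
      have hgr := gronwall_int hsb hKpos hgI' hg0' hycont' hineq2
      -- bound the exponent and K
      have hgbd : (∫ σ in s..b, g σ) ≤ a1 := by
        have hb1 := hg_bd t ht0.le ht1
        have h5 : (∫ σ in t..b, g σ) - (∫ σ in t..s, g σ) = ∫ σ in s..b, g σ := by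
          have := primitive_sub (s := t) hgI hs.1 hs.2 le_rfl
          simpa using this
        have h6 : 0 ≤ ∫ σ in t..s, g σ :=
          intervalIntegral.integral_nonneg hs.1 fun x hx =>
            (hg_pos x (hIcc ⟨hx.1, hx.2.trans hs.2⟩)).le
        rw [← hbdef] at hb1
        linarith
      have hhbd : (∫ τ in s..b, h τ) ≤ a2 := by
        have hb1 := hh_bd t ht0.le ht1
        have h5 : (∫ σ in t..b, h σ) - (∫ σ in t..s, h σ) = ∫ σ in s..b, h σ := by
          have := primitive_sub (s := t) hhI hs.1 hs.2 le_rfl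
          simpa using this
        have h6 : 0 ≤ ∫ σ in t..s, h σ :=
          intervalIntegral.integral_nonneg hs.1 fun x hx =>
            (hh_pos x (hIcc ⟨hx.1, hx.2.trans hs.2⟩)).le
        rw [← hbdef] at hb1
        linarith
      have hys : 0 < y s := hy_pos s (hIcc (hsubIcc (left_mem_Icc.2 hsb)))
      calc y b ≤ K * Real.exp (∫ σ in s..b, g σ) := hgr
        _ ≤ (y s + a2) * Real.exp a1 := by
          apply mul_le_mul (by simp only [hKdef]; linarith) (Real.exp_le_exp.2 hgbd)
            (Real.exp_pos _).le (by linarith)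
    -- integrate the estimate over s ∈ [t, b]
    have hyII : IntervalIntegrable y volume t b := by
      rw [intervalIntegrable_iff_integrableOn_Icc_of_le htb.le]; exact hyI
    have hmono : (∫ s in t..b, y b) ≤ ∫ s in t..b, (y s + a2) * Real.exp a1 := by
      apply intervalIntegral.integral_mono_on htb.le intervalIntegrable_const
        ((hyII.add intervalIntegrable_const).mul_const _) key
    have hL : (∫ _ in t..b, y b) = α * y b := by
      rw [intervalIntegral.integral_const]
      simp [hbdef]
    have hR : (∫ s in t..b, (y s + a2) * Real.exp a1)
        = ((∫ s in t..b, y s) + α * a2) * Real.exp a1 := by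
      rw [intervalIntegral.integral_mul_const, intervalIntegral.integral_add hyII
        intervalIntegrable_const, intervalIntegral.integral_const]
      simp [hbdef]
    have hybd := hy_bd t ht0.le ht1
    rw [← hbdef] at hybd
    have hexp : (0:ℝ) < Real.exp a1 := Real.exp_pos _
    have hfinal : α * y b ≤ (a3 + α * a2) * Real.exp a1 := by
      rw [hL, hR] at hmono
      nlinarith
    have h9 : (a3 / α + a2) * Real.exp a1 = ((a3 + α * a2) * Real.exp a1) / α := by
      field_simp
    rw [h9, le_div_iff₀ hα]
    nlinarith
  intro t ht0 ht1
  rcases eq_or_lt_of_le ht0 with rfl | hlt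
  · -- t = t0 : limiting argument
    have hmem : t0 + α ∈ Set.Ioo t0 t1 := ⟨by linarith, ht1⟩
    have hcont : ContinuousAt y (t0 + α) := (hderiv _ hmem).continuousAt
    have hev : ∀ᶠ u in 𝓝[>] (t0 + α), y u ≤ (a3 / α + a2) * Real.exp a1 := by
      filter_upwards [Ioo_mem_nhdsGT
        (ht1 : t0 + α < t1)] with u hu
      have := core (u - α) (by linarith [hu.1]) (by linarith [hu.2])
      simpa using this
    exact le_of_tendsto (hcont.continuousWithinAt.tendsto) hev
  · exact core t hlt ht1
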